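/- Let ν be a probability measure on ℝⁿ with finite second moments, let Q ∈ ℝ^{d×d} and R ∈ ℝ^{m×m} be symmetric positive definite, and assume the system is mean square stabilizable, i.e. there exist K̄ ∈ ℝ^{m×d} and a symmetric positive definite P̄ such that P̄ − C̄₀ᵀ(Σ̃ ⊗ P̄)C̄₀ is positive definite, where C̄₀ is the vertical stacking of A₀ + B₀K̄, …, Aₙ + BₙK̄. Define the value-iteration sequence P₀ = 0 and P_{k+1} = Q + F(P_k) − H(P_k)ᵀ(R + G(P_k))⁻¹H(P_k). Then P_k ⪯ P_{k+1} for all k, the sequence (P_k) is bounded above in the Loewner order, and it converges (entrywise) to a symmetric positive definite matrix P_∞ that satisfies the Riccati equation P_∞ = Q + F(P_∞) − H(P_∞)ᵀ(R + G(P_∞))⁻¹H(P_∞). -/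

import Mathlib

open MeasureTheory Matrix Filter
open scoped Kronecker

noncomputable section

/-- `A(w) = A₀ + Σᵢ w⁽ⁱ⁾ Aᵢ`. -/
def Amat {n d : ℕ} (A : Fin (n + 1) → Matrix (Fin d) (Fin d) ℝ) (w : Fin n → ℝ) :
    Matrix (Fin d) (Fin d) ℝ :=
  A 0 + ∑ i : Fin n, w i • A i.succ

/-- `B(w) = B₀ + Σᵢ w⁽ⁱ⁾ Bᵢ`. -/
def Bmat {n d m : ℕ} (B : Fin (n + 1) → Matrix (Fin d) (Fin m) ℝ) (w : Fin n → ℝ) :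
    Matrix (Fin d) (Fin m) ℝ :=
  B 0 + ∑ i : Fin n, w i • B i.succ

/-- `Ā₀`: the `((n+1)d) × d` vertical stacking of `A₀, A₁, …, Aₙ`. -/
def Abar {n d : ℕ} (A : Fin (n + 1) → Matrix (Fin d) (Fin d) ℝ) :
    Matrix (Fin (n + 1) × Fin d) (Fin d) ℝ :=
  Matrix.of fun p j => A p.1 p.2 j

/-- `B̄₀`: the `((n+1)d) × m` vertical stacking of `B₀, B₁, …, Bₙ`. -/
def Bbar {n d m : ℕ} (B : Fin (n + 1) → Matrix (Fin d) (Fin m) ℝ) :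
    Matrix (Fin (n + 1) × Fin d) (Fin m) ℝ :=
  Matrix.of fun p j => B p.1 p.2 j

/-- `Σ̃ = [[1, μᵀ], [μ, Σ + μμᵀ]]`. -/
def tildeSigma {n : ℕ} (μ : Fin n → ℝ) (S : Matrix (Fin n) (Fin n) ℝ) :
    Matrix (Fin (n + 1)) (Fin (n + 1)) ℝ :=
  Matrix.of fun i j =>
    Fin.cases (motive := fun _ => ℝ)
      (Fin.cases (motive := fun _ => ℝ) (1 : ℝ) (fun j' => μ j') j)
      (fun i' => Fin.cases (motive := fun _ => ℝ) (μ i')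
        (fun j' => S i' j' + μ i' * μ j') j) i

/-- `F(P) = Ā₀ᵀ(Σ̃ ⊗ P)Ā₀`. -/
def Fm {n d : ℕ} (A : Fin (n + 1) → Matrix (Fin d) (Fin d) ℝ)
    (St : Matrix (Fin (n + 1)) (Fin (n + 1)) ℝ) (P : Matrix (Fin d) (Fin d) ℝ) :
    Matrix (Fin d) (Fin d) ℝ :=
  (Abar A)ᵀ * (St ⊗ₖ P) * Abar A

/-- `G(P) = B̄₀ᵀ(Σ̃ ⊗ P)B̄₀`. -/
def Gm {n d m : ℕ} (B : Fin (n + 1) → Matrix (Fin d) (Fin m) ℝ)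
    (St : Matrix (Fin (n + 1)) (Fin (n + 1)) ℝ) (P : Matrix (Fin d) (Fin d) ℝ) :
    Matrix (Fin m) (Fin m) ℝ :=
  (Bbar B)ᵀ * (St ⊗ₖ P) * Bbar B

/-- `H(P) = B̄₀ᵀ(Σ̃ ⊗ P)Ā₀`. -/
def Hm {n d m : ℕ} (A : Fin (n + 1) → Matrix (Fin d) (Fin d) ℝ)
    (B : Fin (n + 1) → Matrix (Fin d) (Fin m) ℝ)
    (St : Matrix (Fin (n + 1)) (Fin (n + 1)) ℝ) (P : Matrix (Fin d) (Fin d) ℝ) :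
    Matrix (Fin m) (Fin d) ℝ :=
  (Bbar B)ᵀ * (St ⊗ₖ P) * Abar A


/-- The value-iteration sequence `P₀ = 0`,
`P_{k+1} = Q + F(P_k) − H(P_k)ᵀ(R + G(P_k))⁻¹H(P_k)`. -/
def Pseq {n d m : ℕ} (A : Fin (n + 1) → Matrix (Fin d) (Fin d) ℝ)
    (B : Fin (n + 1) → Matrix (Fin d) (Fin m) ℝ)
    (St : Matrix (Fin (n + 1)) (Fin (n + 1)) ℝ)
    (Q : Matrix (Fin d) (Fin d) ℝ) (R : Matrix (Fin m) (Fin m) ℝ) :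
    ℕ → Matrix (Fin d) (Fin d) ℝ
  | 0 => 0
  | k + 1 => Q + Fm A St (Pseq A B St Q R k) -
      (Hm A B St (Pseq A B St Q R k))ᵀ * (R + Gm B St (Pseq A B St Q R k))⁻¹ *
        Hm A B St (Pseq A B St Q R k)

lemma psd_iff_quad {d : ℕ} {M : Matrix (Fin d) (Fin d) ℝ} (h1 : M.IsHermitian)
    (h2 : ∀ x, 0 ≤ x ⬝ᵥ (M *ᵥ x)) : M.PosSemidef :=
  PosSemidef.of_dotProduct_mulVec_nonneg h1 (fun x => by simpa using h2 x)

lemma quad_nonneg {d : ℕ} {M : Matrix (Fin d) (Fin d) ℝ} (hM : M.PosSemidef)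
    (x : Fin d → ℝ) : 0 ≤ x ⬝ᵥ (M *ᵥ x) := by simpa using hM.dotProduct_mulVec_nonneg x

lemma exists_smul_psd {d : ℕ} {D S : Matrix (Fin d) (Fin d) ℝ}
    (hD : D.PosDef) (hS : S.PosSemidef) :
    ∃ c : ℝ, 0 < c ∧ (c • D - S).PosSemidef := by
  rcases Nat.eq_zero_or_pos d with hd | hd
  · subst hd
    refine ⟨1, one_pos, ⟨?_, fun x => ?_⟩⟩
    · exact Subsingleton.elim _ _
    · simp [dotProduct, Finsupp.sum_fintype]
  · -- the unit sphere
    set sph : Set (Fin d → ℝ) := {x | x ⬝ᵥ x = 1} with hsph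
    have hcont_dot : Continuous fun x : Fin d → ℝ => x ⬝ᵥ x :=
      continuous_id.dotProduct continuous_id
    have hclosed : IsClosed sph := isClosed_eq hcont_dot continuous_const
    have hbdd : Bornology.IsBounded sph := by
      rw [Metric.isBounded_iff_subset_closedBall 0]
      refine ⟨1, fun x hx => ?_⟩
      simp only [Metric.mem_closedBall, dist_zero_right]
      rw [pi_norm_le_iff_of_nonneg zero_le_one]
      intro i
      rw [Real.norm_eq_abs, abs_le_one_iff_mul_self_le_one]
      calc x i * x i ≤ ∑ j, x j * x j :=
            Finset.single_le_sum (fun j _ => mul_self_nonneg (x j)) (Finset.mem_univ i)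
        _ = 1 := hx
    have hcomp : IsCompact sph := Metric.isCompact_of_isClosed_isBounded hclosed hbdd
    have hne : sph.Nonempty := by
      refine ⟨Pi.single ⟨0, hd⟩ 1, ?_⟩
      simp [hsph, single_dotProduct]
    have hcD : Continuous fun x : Fin d → ℝ => x ⬝ᵥ (D *ᵥ x) :=
      continuous_id.dotProduct (continuous_const.matrix_mulVec continuous_id)
    have hcS : Continuous fun x : Fin d → ℝ => x ⬝ᵥ (S *ᵥ x) :=
      continuous_id.dotProduct (continuous_const.matrix_mulVec continuous_id)
    obtain ⟨x₀, hx₀, hmin⟩ := hcomp.exists_isMinOn hne hcD.continuousOn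
    obtain ⟨y₀, hy₀, hmax⟩ := hcomp.exists_isMaxOn hne hcS.continuousOn
    set ε := x₀ ⬝ᵥ (D *ᵥ x₀) with hε
    set Mx := y₀ ⬝ᵥ (S *ᵥ y₀) with hMx
    have hx₀ne : x₀ ≠ 0 := by
      intro h; rw [hsph] at hx₀; simp [h] at hx₀
    have hεpos : 0 < ε := by simpa using hD.dotProduct_mulVec_pos hx₀ne
    have hMnn : 0 ≤ Mx := quad_nonneg hS y₀
    refine ⟨(Mx + 1) / ε, div_pos (by linarith) hεpos, ?_⟩
    have hherm : (((Mx + 1) / ε) • D).IsHermitian := by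
      show _ᴴ = _
      rw [Matrix.conjTranspose_smul, star_trivial, hD.1]
    refine psd_iff_quad (hherm.sub hS.1) ?_
    intro x
    rcases eq_or_ne x 0 with rfl | hx
    · simp
    · have ht : 0 < x ⬝ᵥ x := by
        obtain ⟨i, hi⟩ := Function.ne_iff.mp hx
        have : 0 < x i * x i := mul_self_pos.mpr (by simpa using hi)
        calc (0:ℝ) < x i * x i := this
          _ ≤ ∑ j, x j * x j :=
            Finset.single_le_sum (fun j _ => mul_self_nonneg (x j)) (Finset.mem_univ i)
          _ = x ⬝ᵥ x := rfl
      set t := x ⬝ᵥ x with htdef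
      set u := (Real.sqrt t)⁻¹ • x with hu
      have hst : Real.sqrt t ≠ 0 := by positivity
      have hscale : ∀ M : Matrix (Fin d) (Fin d) ℝ,
          x ⬝ᵥ (M *ᵥ x) = t * (u ⬝ᵥ (M *ᵥ u)) := by
        intro M
        rw [hu, smul_dotProduct, Matrix.mulVec_smul, dotProduct_smul]
        rw [smul_eq_mul, smul_eq_mul, ← mul_assoc, ← mul_assoc]
        rw [show t * (Real.sqrt t)⁻¹ * (Real.sqrt t)⁻¹ = 1 by
          rw [mul_assoc, ← mul_inv, Real.mul_self_sqrt ht.le, mul_inv_cancel₀ ht.ne']]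
        ring
      have husph : u ∈ sph := by
        rw [hsph]
        show u ⬝ᵥ u = 1
        rw [hu, smul_dotProduct, dotProduct_smul, smul_eq_mul, smul_eq_mul, ← htdef,
          ← mul_assoc, ← mul_inv, Real.mul_self_sqrt ht.le, inv_mul_cancel₀ ht.ne']
      have h1 : ε ≤ u ⬝ᵥ (D *ᵥ u) := hmin husph
      have h2 : u ⬝ᵥ (S *ᵥ u) ≤ Mx := hmax husph
      rw [Matrix.sub_mulVec, dotProduct_sub, Matrix.smul_mulVec, dotProduct_smul,
        smul_eq_mul]
      rw [hscale D, hscale S]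
      have : Mx + 1 ≤ (Mx + 1) / ε * (u ⬝ᵥ (D *ᵥ u)) := by
        rw [div_mul_eq_mul_div, le_div_iff₀ hεpos]
        have := mul_le_mul_of_nonneg_left h1 (by linarith : (0:ℝ) ≤ Mx + 1)
        linarith
      nlinarith

noncomputable def Tmap {n d m : ℕ} (A : Fin (n + 1) → Matrix (Fin d) (Fin d) ℝ)
    (B : Fin (n + 1) → Matrix (Fin d) (Fin m) ℝ)
    (St : Matrix (Fin (n + 1)) (Fin (n + 1)) ℝ)
    (Q : Matrix (Fin d) (Fin d) ℝ) (R : Matrix (Fin m) (Fin m) ℝ)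
    (P : Matrix (Fin d) (Fin d) ℝ) : Matrix (Fin d) (Fin d) ℝ :=
  Q + Fm A St P - (Hm A B St P)ᵀ * (R + Gm B St P)⁻¹ * Hm A B St P

variable {n d m : ℕ} {A : Fin (n + 1) → Matrix (Fin d) (Fin d) ℝ}
  {B : Fin (n + 1) → Matrix (Fin d) (Fin m) ℝ}
  {St : Matrix (Fin (n + 1)) (Fin (n + 1)) ℝ}
  {Q : Matrix (Fin d) (Fin d) ℝ} {R : Matrix (Fin m) (Fin m) ℝ}

lemma kron_psd {l p : Type*} [Fintype l] [DecidableEq l] [Fintype p] [DecidableEq p]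
    {S : Matrix l l ℝ} {P : Matrix p p ℝ} (hS : S.PosSemidef) (hP : P.PosSemidef) :
    (S ⊗ₖ P).PosSemidef := by
  exact hS.kronecker hP

lemma conj_psd {d' q : Type*} [Fintype d'] [Fintype q] {M : Matrix d' d' ℝ}
    (hM : M.PosSemidef) (X : Matrix d' q ℝ) : (Xᵀ * M * X).PosSemidef := by
  simpa [conjTranspose_eq_transpose_of_trivial] using hM.conjTranspose_mul_mul_same X

lemma transpose_of_herm {d' : Type*} {M : Matrix d' d' ℝ} (h : M.IsHermitian) : Mᵀ = M := by
  rw [← conjTranspose_eq_transpose_of_trivial]; exact h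

lemma Gm_psd (hSt : St.PosSemidef) {P : Matrix (Fin d) (Fin d) ℝ} (hP : P.PosSemidef) :
    (Gm B St P).PosSemidef := conj_psd (kron_psd hSt hP) _

lemma W_posDef (hSt : St.PosSemidef) (hR : R.PosDef) {P : Matrix (Fin d) (Fin d) ℝ}
    (hP : P.PosSemidef) : (R + Gm B St P).PosDef :=
  hR.add_posSemidef (Gm_psd hSt hP)

lemma key_identity (hSt : St.PosSemidef) (hR : R.PosDef)
    {P : Matrix (Fin d) (Fin d) ℝ} (hP : P.PosSemidef) (K : Matrix (Fin m) (Fin d) ℝ) :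
    Q + Kᵀ * R * K + (Abar A + Bbar B * K)ᵀ * (St ⊗ₖ P) * (Abar A + Bbar B * K)
      = Tmap A B St Q R P +
        (K + (R + Gm B St P)⁻¹ * Hm A B St P)ᵀ * (R + Gm B St P) *
          (K + (R + Gm B St P)⁻¹ * Hm A B St P) := by
  set W : Matrix (Fin m) (Fin m) ℝ := R + Gm B St P with hWdef
  have hW : W.PosDef := W_posDef hSt hR hP
  have hWdet : IsUnit W.det := hW.det_pos.ne'.isUnit
  have h1 : W * W⁻¹ = 1 := Matrix.mul_nonsing_inv _ hWdet
  have h2 : W⁻¹ * W = 1 := Matrix.nonsing_inv_mul _ hWdet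
  have hWsymm : Wᵀ = W := transpose_of_herm hW.1
  have hinvT : (W⁻¹)ᵀ = W⁻¹ := by rw [Matrix.transpose_nonsing_inv, hWsymm]
  have hMsym : (St ⊗ₖ P)ᵀ = St ⊗ₖ P := by
    rw [← kroneckerMap_transpose, transpose_of_herm hSt.1, transpose_of_herm hP.1]
  have cW1 : ∀ X : Matrix (Fin m) (Fin d) ℝ, W * (W⁻¹ * X) = X := fun X => by
    rw [← Matrix.mul_assoc, h1, Matrix.one_mul]
  have cW2 : ∀ X : Matrix (Fin m) (Fin d) ℝ, W⁻¹ * (W * X) = X := fun X => by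
    rw [← Matrix.mul_assoc, h2, Matrix.one_mul]
  have hRK : ∀ X : Matrix (Fin m) (Fin d) ℝ, Kᵀ * (R * X) + Kᵀ * (Gm B St P * X)
      = Kᵀ * (W * X) := fun X => by
    rw [hWdef, Matrix.add_mul, Matrix.mul_add]
  simp only [Tmap, Fm, Hm]
  simp only [← hWdef]
  simp only [Matrix.transpose_add, Matrix.transpose_mul, Matrix.transpose_transpose,
    hinvT, hMsym, Matrix.add_mul, Matrix.mul_add, Matrix.mul_assoc, cW1, cW2]
  have hGmK : Kᵀ * ((Bbar B)ᵀ * ((St ⊗ₖ P) * (Bbar B * K))) = Kᵀ * (Gm B St P * K) := by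
    rw [Gm]; simp only [Matrix.mul_assoc]
  rw [hGmK, ← hRK]
  abel

lemma kronecker_sub' {l p : Type*} (S : Matrix l l ℝ) (P P' : Matrix p p ℝ) :
    S ⊗ₖ (P' - P) = S ⊗ₖ P' - S ⊗ₖ P := by
  ext ⟨i, j⟩ ⟨k, l⟩
  simp [Matrix.kroneckerMap_apply, mul_sub]

lemma key_psd (hSt : St.PosSemidef) (hR : R.PosDef)
    {P : Matrix (Fin d) (Fin d) ℝ} (hP : P.PosSemidef) (K : Matrix (Fin m) (Fin d) ℝ) :
    (Q + Kᵀ * R * K + (Abar A + Bbar B * K)ᵀ * (St ⊗ₖ P) * (Abar A + Bbar B * K)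
      - Tmap A B St Q R P).PosSemidef := by
  rw [key_identity hSt hR hP K, add_sub_cancel_left]
  exact conj_psd (W_posDef hSt hR hP).posSemidef _

lemma Tmap_eq_at_min (hSt : St.PosSemidef) (hR : R.PosDef)
    {P : Matrix (Fin d) (Fin d) ℝ} (hP : P.PosSemidef) :
    Q + (-((R + Gm B St P)⁻¹ * Hm A B St P))ᵀ * R * (-((R + Gm B St P)⁻¹ * Hm A B St P))
      + (Abar A + Bbar B * (-((R + Gm B St P)⁻¹ * Hm A B St P)))ᵀ * (St ⊗ₖ P) *
        (Abar A + Bbar B * (-((R + Gm B St P)⁻¹ * Hm A B St P)))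
      = Tmap A B St Q R P := by
  rw [key_identity hSt hR hP _, neg_add_cancel]
  simp

lemma Tmap_mono (hSt : St.PosSemidef) (hR : R.PosDef)
    {P P' : Matrix (Fin d) (Fin d) ℝ} (hP : P.PosSemidef) (hP' : P'.PosSemidef)
    (hle : (P' - P).PosSemidef) :
    (Tmap A B St Q R P' - Tmap A B St Q R P).PosSemidef := by
  set K : Matrix (Fin m) (Fin d) ℝ := -((R + Gm B St P')⁻¹ * Hm A B St P') with hK
  set C : Matrix (Fin (n+1) × Fin d) (Fin d) ℝ := Abar A + Bbar B * K with hC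
  have e1 : Q + Kᵀ * R * K + Cᵀ * (St ⊗ₖ P') * C = Tmap A B St Q R P' :=
    Tmap_eq_at_min hSt hR hP'
  have e2 : (Q + Kᵀ * R * K + Cᵀ * (St ⊗ₖ P) * C - Tmap A B St Q R P).PosSemidef :=
    key_psd hSt hR hP K
  have e3 : (Cᵀ * (St ⊗ₖ P') * C - Cᵀ * (St ⊗ₖ P) * C).PosSemidef := by
    have h : Cᵀ * (St ⊗ₖ P') * C - Cᵀ * (St ⊗ₖ P) * C
        = Cᵀ * (St ⊗ₖ (P' - P)) * C := by
      rw [kronecker_sub', Matrix.mul_sub, Matrix.sub_mul]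
    rw [h]
    exact conj_psd (kron_psd hSt hle) _
  have h4 : Tmap A B St Q R P' - Tmap A B St Q R P
      = (Cᵀ * (St ⊗ₖ P') * C - Cᵀ * (St ⊗ₖ P) * C)
        + (Q + Kᵀ * R * K + Cᵀ * (St ⊗ₖ P) * C - Tmap A B St Q R P) := by
    rw [← e1]; abel
  rw [h4]
  exact e3.add e2

lemma Pseq_succ (k : ℕ) :
    Pseq A B St Q R (k + 1) = Tmap A B St Q R (Pseq A B St Q R k) := rfl

lemma Pseq_one : Pseq A B St Q R 1 = Q := by
  show Q + Fm A St 0 - (Hm A B St 0)ᵀ * (R + Gm B St 0)⁻¹ * Hm A B St 0 = Q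
  simp [Fm, Gm, Hm, Matrix.kronecker_zero]

lemma Pseq_psd_mono (hSt : St.PosSemidef) (hQ : Q.PosDef) (hR : R.PosDef) (k : ℕ) :
    (Pseq A B St Q R k).PosSemidef ∧
      (Pseq A B St Q R (k + 1) - Pseq A B St Q R k).PosSemidef := by
  induction k with
  | zero =>
    refine ⟨Matrix.PosSemidef.zero, ?_⟩
    rw [Pseq_one]
    show (Q - 0).PosSemidef
    simpa using hQ.posSemidef
  | succ k ih =>
    have h1 : (Pseq A B St Q R (k + 1)).PosSemidef := by
      have := ih.2.add ih.1
      rwa [sub_add_cancel] at this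
    refine ⟨h1, ?_⟩
    rw [Pseq_succ (k + 1), Pseq_succ k]
    exact Tmap_mono hSt hR ih.1 h1 ih.2

lemma psd_smul {d' : ℕ} {M : Matrix (Fin d') (Fin d') ℝ} (hM : M.PosSemidef) {c : ℝ}
    (hc : 0 ≤ c) : (c • M).PosSemidef := by
  refine PosSemidef.of_dotProduct_mulVec_nonneg ?_ fun x => ?_
  · show _ᴴ = _
    rw [Matrix.conjTranspose_smul, star_trivial, hM.1]
  · rw [Matrix.smul_mulVec, dotProduct_smul, smul_eq_mul]
    exact mul_nonneg hc (by simpa using hM.dotProduct_mulVec_nonneg x)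

lemma Pseq_bounded (hSt : St.PosSemidef) (hQ : Q.PosDef) (hR : R.PosDef)
    (Kb : Matrix (Fin m) (Fin d) ℝ) (Pb : Matrix (Fin d) (Fin d) ℝ) (hPb : Pb.PosDef)
    (hD : (Pb - (Abar A + Bbar B * Kb)ᵀ * (St ⊗ₖ Pb) * (Abar A + Bbar B * Kb)).PosDef) :
    ∃ c : ℝ, 0 < c ∧ ∀ k, (c • Pb - Pseq A B St Q R k).PosSemidef := by
  set Cb : Matrix (Fin (n+1) × Fin d) (Fin d) ℝ := Abar A + Bbar B * Kb with hCb
  have hS0 : (Q + Kbᵀ * R * Kb).PosSemidef := hQ.posSemidef.add (conj_psd hR.posSemidef Kb)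
  obtain ⟨c, hc, hcD⟩ := exists_smul_psd hD hS0
  refine ⟨c, hc, fun k => ?_⟩
  induction k with
  | zero =>
    show (c • Pb - 0).PosSemidef
    simpa using psd_smul hPb.posSemidef hc.le
  | succ k ih =>
    have hPk := (Pseq_psd_mono (A := A) (B := B) hSt hQ hR k).1
    have e2 : (Q + Kbᵀ * R * Kb + Cbᵀ * (St ⊗ₖ Pseq A B St Q R k) * Cb
        - Pseq A B St Q R (k+1)).PosSemidef := by
      rw [Pseq_succ]; exact key_psd hSt hR hPk Kb
    have e3 : (Cbᵀ * (St ⊗ₖ (c • Pb)) * Cb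
        - Cbᵀ * (St ⊗ₖ Pseq A B St Q R k) * Cb).PosSemidef := by
      have h : Cbᵀ * (St ⊗ₖ (c • Pb)) * Cb - Cbᵀ * (St ⊗ₖ Pseq A B St Q R k) * Cb
          = Cbᵀ * (St ⊗ₖ (c • Pb - Pseq A B St Q R k)) * Cb := by
        rw [kronecker_sub', Matrix.mul_sub, Matrix.sub_mul]
      rw [h]
      exact conj_psd (kron_psd hSt ih) _
    have hkc : Cbᵀ * (St ⊗ₖ (c • Pb)) * Cb = c • (Cbᵀ * (St ⊗ₖ Pb) * Cb) := by
      rw [Matrix.kronecker_smul, Matrix.mul_smul, Matrix.smul_mul]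
    have hid : c • Pb - Pseq A B St Q R (k+1)
        = (c • (Pb - Cbᵀ * (St ⊗ₖ Pb) * Cb) - (Q + Kbᵀ * R * Kb))
          + (Cbᵀ * (St ⊗ₖ (c • Pb)) * Cb - Cbᵀ * (St ⊗ₖ Pseq A B St Q R k) * Cb)
          + (Q + Kbᵀ * R * Kb + Cbᵀ * (St ⊗ₖ Pseq A B St Q R k) * Cb
              - Pseq A B St Q R (k+1)) := by
      rw [hkc, smul_sub]; abel
    rw [hid]
    exact (hcD.add e3).add e2

lemma continuousAt_matmul {X : Type*} [TopologicalSpace X] {l p q : Type*} [Fintype p]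
    {f : X → Matrix l p ℝ} {g : X → Matrix p q ℝ} {x : X}
    (hf : ContinuousAt f x) (hg : ContinuousAt g x) :
    ContinuousAt (fun x => f x * g x) x :=
  ((Continuous.matrix_mul (A := fun z : Matrix l p ℝ × Matrix p q ℝ => z.1) (B := fun z => z.2) continuous_fst continuous_snd).continuousAt).comp (f := fun y => (f y, g y)) (hf.prodMk hg)

lemma psd_iff_quad' {d : ℕ} {M : Matrix (Fin d) (Fin d) ℝ} (h1 : M.IsHermitian)
    (h2 : ∀ x, 0 ≤ x ⬝ᵥ (M *ᵥ x)) : M.PosSemidef :=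
  PosSemidef.of_dotProduct_mulVec_nonneg h1 (fun x => by simpa using h2 x)

lemma tildeSigma_posSemidef {n : ℕ}
    (ν : Measure (Fin n → ℝ)) [IsProbabilityMeasure ν]
    (hint1 : ∀ i, Integrable (fun w : Fin n → ℝ => w i) ν)
    (hint2 : ∀ i j, Integrable (fun w : Fin n → ℝ => w i * w j) ν)
    (μ : Fin n → ℝ) (hμ : ∀ i, μ i = ∫ w, w i ∂ν)
    (Sg : Matrix (Fin n) (Fin n) ℝ)
    (hSg : ∀ i j, Sg i j = ∫ w, (w i - μ i) * (w j - μ j) ∂ν) :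
    (tildeSigma μ Sg).PosSemidef := by
  set v : (Fin n → ℝ) → Fin (n + 1) → ℝ := fun w => Fin.cases 1 w with hv
  have hvint : ∀ i j, Integrable (fun w => v w i * v w j) ν := by
    intro i j
    induction i using Fin.cases with
    | zero =>
      induction j using Fin.cases with
      | zero => simpa [hv] using (integrable_const (1:ℝ))
      | succ j' => simpa [hv] using hint1 j'
    | succ i' =>
      induction j using Fin.cases with
      | zero => simpa [hv] using hint1 i'
      | succ j' => simpa [hv] using hint2 i' j'
  have hE : ∀ i j, tildeSigma μ Sg i j = ∫ w, v w i * v w j ∂ν := by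
    intro i j
    induction i using Fin.cases with
    | zero =>
      induction j using Fin.cases with
      | zero => simp [tildeSigma, hv]
      | succ j' => simp [tildeSigma, hv, hμ j']
    | succ i' =>
      induction j using Fin.cases with
      | zero => simp [tildeSigma, hv, hμ i']
      | succ j' =>
        simp only [tildeSigma, hv, Matrix.of_apply, Fin.cases_succ]
        have hrw : (fun w : Fin n → ℝ => (w i' - μ i') * (w j' - μ j')) =
            fun w => (w i' * w j' + μ i' * μ j') - (μ i' * w j' + μ j' * w i') := by
          funext w; ring
        have h1 : Integrable (fun w : Fin n → ℝ => w i' * w j' + μ i' * μ j') ν :=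
          (hint2 i' j').add (integrable_const _)
        have h2 : Integrable (fun w : Fin n → ℝ => μ i' * w j' + μ j' * w i') ν :=
          ((hint1 j').const_mul _).add ((hint1 i').const_mul _)
        rw [hSg i' j', hrw, integral_sub h1 h2, integral_add (hint2 i' j') (integrable_const _),
          integral_add ((hint1 j').const_mul _) ((hint1 i').const_mul _)]
        simp only [integral_const_mul, integral_const, probReal_univ, measure_univ, ENNReal.toReal_one,
          smul_eq_mul, one_mul]
        rw [← hμ i', ← hμ j']
        ring
  refine psd_iff_quad' ?_ ?_
  · show _ᴴ = _
    ext i j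
    simp only [conjTranspose_apply, star_trivial]
    rw [hE, hE]
    simp_rw [mul_comm]
  · intro x
    have key : x ⬝ᵥ (tildeSigma μ Sg *ᵥ x) = ∫ w, (∑ i, x i * v w i)^2 ∂ν := by
      have hsq : ∀ w, (∑ i, x i * v w i)^2 =
          ∑ i, ∑ j, (x i * x j) * (v w i * v w j) := by
        intro w
        rw [sq, Finset.sum_mul_sum]
        exact Finset.sum_congr rfl fun i _ => Finset.sum_congr rfl fun j _ => by ring
      simp_rw [hsq]
      rw [integral_finset_sum _ (fun i _ => integrable_finset_sum _
        (fun j _ => (hvint i j).const_mul _))]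
      simp_rw [integral_finset_sum _ (fun j _ => (hvint _ j).const_mul _),
        integral_const_mul]
      simp only [dotProduct, mulVec, Finset.mul_sum]
      refine Finset.sum_congr rfl fun i _ => Finset.sum_congr rfl fun j _ => ?_
      rw [hE]; ring
    rw [key]
    exact integral_nonneg fun w => sq_nonneg _

/-- Under mean square stabilizability, value iteration is monotone, bounded
above in the Loewner order, and converges entrywise to a symmetric positive definite solution
of the Riccati equation. -/
theorem stmt11 {n d m : ℕ}
    (A : Fin (n + 1) → Matrix (Fin d) (Fin d) ℝ)
    (B : Fin (n + 1) → Matrix (Fin d) (Fin m) ℝ)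
    (ν : Measure (Fin n → ℝ)) [IsProbabilityMeasure ν]
    (hint1 : ∀ i, Integrable (fun w : Fin n → ℝ => w i) ν)
    (hint2 : ∀ i j, Integrable (fun w : Fin n → ℝ => w i * w j) ν)
    (μ : Fin n → ℝ) (hμ : ∀ i, μ i = ∫ w, w i ∂ν)
    (Sg : Matrix (Fin n) (Fin n) ℝ)
    (hSg : ∀ i j, Sg i j = ∫ w, (w i - μ i) * (w j - μ j) ∂ν)
    (Q : Matrix (Fin d) (Fin d) ℝ) (hQ : Q.PosDef)
    (R : Matrix (Fin m) (Fin m) ℝ) (hR : R.PosDef)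
    -- mean square stabilizability
    (hstab : ∃ (Kb : Matrix (Fin m) (Fin d) ℝ) (Pb : Matrix (Fin d) (Fin d) ℝ),
      Pb.PosDef ∧
      (Pb - (Matrix.of fun (p : Fin (n + 1) × Fin d) (j : Fin d) =>
          (A p.1 + B p.1 * Kb) p.2 j)ᵀ *
        (tildeSigma μ Sg ⊗ₖ Pb) *
        (Matrix.of fun (p : Fin (n + 1) × Fin d) (j : Fin d) =>
          (A p.1 + B p.1 * Kb) p.2 j)).PosDef) :
    (∀ k, (Pseq A B (tildeSigma μ Sg) Q R (k + 1) -
        Pseq A B (tildeSigma μ Sg) Q R k).PosSemidef) ∧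
    (∃ U : Matrix (Fin d) (Fin d) ℝ, ∀ k,
        (U - Pseq A B (tildeSigma μ Sg) Q R k).PosSemidef) ∧
    (∃ Pinf : Matrix (Fin d) (Fin d) ℝ, Pinf.PosDef ∧
      (∀ i j, Filter.Tendsto (fun k => Pseq A B (tildeSigma μ Sg) Q R k i j)
        Filter.atTop (nhds (Pinf i j))) ∧
      Pinf = Q + Fm A (tildeSigma μ Sg) Pinf -
        (Hm A B (tildeSigma μ Sg) Pinf)ᵀ * (R + Gm B (tildeSigma μ Sg) Pinf)⁻¹ *
          Hm A B (tildeSigma μ Sg) Pinf) := by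
  set St : Matrix (Fin (n + 1)) (Fin (n + 1)) ℝ := tildeSigma μ Sg with hStdef
  have hSt : St.PosSemidef := tildeSigma_posSemidef ν hint1 hint2 μ hμ Sg hSg
  -- monotonicity
  have hmonoall : ∀ k, (Pseq A B St Q R (k + 1) - Pseq A B St Q R k).PosSemidef :=
    fun k => (Pseq_psd_mono hSt hQ hR k).2
  have hpsd : ∀ k, (Pseq A B St Q R k).PosSemidef :=
    fun k => (Pseq_psd_mono (A := A) (B := B) hSt hQ hR k).1
  -- boundedness
  obtain ⟨Kb, Pb, hPb, hDpd⟩ := hstab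
  have hCbeq : (Matrix.of fun (p : Fin (n + 1) × Fin d) (j : Fin d) =>
      (A p.1 + B p.1 * Kb) p.2 j) = Abar A + Bbar B * Kb := by
    ext ⟨p1, p2⟩ j
    simp [Abar, Bbar, Matrix.add_apply, Matrix.mul_apply]
  rw [hCbeq] at hDpd
  obtain ⟨c, hc, hbd⟩ := Pseq_bounded hSt hQ hR Kb Pb hPb hDpd
  refine ⟨hmonoall, ⟨c • Pb, hbd⟩, ?_⟩
  -- convergence
  set e : Fin d → (Fin d → ℝ) := fun i => Pi.single i 1 with he
  set g : (Fin d → ℝ) → ℕ → ℝ := fun x k => x ⬝ᵥ (Pseq A B St Q R k *ᵥ x) with hg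
  have hgmono : ∀ x, Monotone (g x) := by
    intro x
    refine monotone_nat_of_le_succ fun k => ?_
    have := quad_nonneg (hmonoall k) x
    rw [Matrix.sub_mulVec, dotProduct_sub, sub_nonneg] at this
    exact this
  have hgle : ∀ x k, g x k ≤ x ⬝ᵥ ((c • Pb) *ᵥ x) := by
    intro x k
    have := quad_nonneg (hbd k) x
    rw [Matrix.sub_mulVec, dotProduct_sub, sub_nonneg] at this
    exact this
  have hgbdd : ∀ x, BddAbove (Set.range (g x)) := fun x =>
    ⟨x ⬝ᵥ ((c • Pb) *ᵥ x), by rintro y ⟨k, rfl⟩; exact hgle x k⟩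
  have hgtend : ∀ x, Tendsto (g x) atTop (nhds (⨆ k, g x k)) := fun x =>
    tendsto_atTop_ciSup (hgmono x) (hgbdd x)
  -- entries from quadratic forms
  have hsingle : ∀ (M : Matrix (Fin d) (Fin d) ℝ) (i j : Fin d),
      (e i) ⬝ᵥ (M *ᵥ (e j)) = M i j := by
    intro M i j
    rw [he]
    simp [single_dotProduct, Matrix.mulVec_single]
  have hquad_entries : ∀ (M : Matrix (Fin d) (Fin d) ℝ), M.IsHermitian → ∀ i j,
      (e i + e j) ⬝ᵥ (M *ᵥ (e i + e j)) = M i i + M j j + 2 * M i j := by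
    intro M hM i j
    have hsym : M j i = M i j := by
      have := congrFun (congrFun hM j) i
      simpa [Matrix.conjTranspose_apply] using this.symm
    rw [add_dotProduct, Matrix.mulVec_add, dotProduct_add, dotProduct_add,
      hsingle M i i, hsingle M i j, hsingle M j i, hsingle M j j, hsym]
    ring
  have hentry : ∀ i j k, Pseq A B St Q R k i j
      = (g (e i + e j) k - g (e i) k - g (e j) k) / 2 := by
    intro i j k
    show Pseq A B St Q R k i j =
      ((e i + e j) ⬝ᵥ (Pseq A B St Q R k *ᵥ (e i + e j))
        - (e i) ⬝ᵥ (Pseq A B St Q R k *ᵥ (e i))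
        - (e j) ⬝ᵥ (Pseq A B St Q R k *ᵥ (e j))) / 2
    rw [hquad_entries _ (hpsd k).1 i j, hsingle, hsingle]
    ring
  set Pinf : Matrix (Fin d) (Fin d) ℝ := Matrix.of fun i j =>
    ((⨆ k, g (e i + e j) k) - (⨆ k, g (e i) k) - (⨆ k, g (e j) k)) / 2 with hPinf
  have htend : ∀ i j, Tendsto (fun k => Pseq A B St Q R k i j) atTop (nhds (Pinf i j)) := by
    intro i j
    have h := (((hgtend (e i + e j)).sub (hgtend (e i))).sub (hgtend (e j))).div_const 2
    refine Tendsto.congr (fun k => (hentry i j k).symm) h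
  have hquadtend : ∀ x : Fin d → ℝ, Tendsto (g x) atTop (nhds (x ⬝ᵥ (Pinf *ᵥ x))) := by
    intro x
    have hexp : ∀ (M : Matrix (Fin d) (Fin d) ℝ),
        x ⬝ᵥ (M *ᵥ x) = ∑ i, ∑ j, x i * (M i j * x j) := by
      intro M
      simp [dotProduct, mulVec, Finset.mul_sum]
    rw [hexp]
    refine Tendsto.congr (fun k => (hexp (Pseq A B St Q R k)).symm) ?_
    refine tendsto_finset_sum _ fun i _ => tendsto_finset_sum _ fun j _ => ?_
    exact Tendsto.const_mul _ ((htend i j).mul_const _)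
  have hquadPinf : ∀ x, x ⬝ᵥ (Pinf *ᵥ x) = ⨆ k, g x k := fun x =>
    tendsto_nhds_unique (hquadtend x) (hgtend x)
  have hPinfherm : Pinf.IsHermitian := by
    show _ᴴ = _
    ext i j
    simp only [Matrix.conjTranspose_apply, star_trivial, hPinf, Matrix.of_apply]
    rw [add_comm (e j) (e i)]
    ring
  have hPinfsub : ∀ k0, (Pinf - Pseq A B St Q R k0).PosSemidef := by
    intro k0
    refine psd_iff_quad (hPinfherm.sub (hpsd k0).1) fun x => ?_
    rw [Matrix.sub_mulVec, dotProduct_sub, sub_nonneg, hquadPinf x]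
    exact le_ciSup (hgbdd x) k0
  have hPinfpsd : Pinf.PosSemidef := by
    have := hPinfsub 0
    rw [show Pseq A B St Q R 0 = (0 : Matrix (Fin d) (Fin d) ℝ) from rfl, sub_zero] at this
    exact this
  have hPinfPD : Pinf.PosDef := by
    have h1 := hQ.add_posSemidef (hPinfsub 1)
    have h2 : Q + (Pinf - Pseq A B St Q R 1) = Pinf := by
      rw [Pseq_one]; abel
    rwa [h2] at h1
  -- fixed point
  have htendM : Tendsto (fun k => Pseq A B St Q R k) atTop (nhds Pinf) := by
    apply tendsto_pi_nhds.mpr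
    intro i
    apply tendsto_pi_nhds.mpr
    intro j
    exact htend i j
  have hWinf : (R + Gm B St Pinf).PosDef := W_posDef hSt hR hPinfpsd
  have hkron : Continuous (fun P : Matrix (Fin d) (Fin d) ℝ => St ⊗ₖ P) := by
    apply continuous_matrix
    rintro ⟨i1, i2⟩ ⟨j1, j2⟩
    exact continuous_const.mul (((continuous_apply j2).comp (continuous_apply i2)))
  have hF : Continuous (fun P : Matrix (Fin d) (Fin d) ℝ => Fm A St P) :=
    (continuous_const.matrix_mul hkron).matrix_mul continuous_const
  have hG : Continuous (fun P : Matrix (Fin d) (Fin d) ℝ => Gm B St P) :=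
    (continuous_const.matrix_mul hkron).matrix_mul continuous_const
  have hH : Continuous (fun P : Matrix (Fin d) (Fin d) ℝ => Hm A B St P) :=
    (continuous_const.matrix_mul hkron).matrix_mul continuous_const
  have hinv : ContinuousAt (fun P : Matrix (Fin d) (Fin d) ℝ => (R + Gm B St P)⁻¹) Pinf :=
    ContinuousAt.comp (continuousAt_matrix_inv _ (by
      rw [show (Ring.inverse : ℝ → ℝ) = Inv.inv from funext Ring.inverse_eq_inv]
      exact continuousAt_inv₀ hWinf.det_pos.ne'))
      ((continuous_const.add hG).continuousAt)
  have hcontT : ContinuousAt (Tmap A B St Q R) Pinf := by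
    have : ContinuousAt (fun P : Matrix (Fin d) (Fin d) ℝ =>
        Q + Fm A St P - (Hm A B St P)ᵀ * (R + Gm B St P)⁻¹ * Hm A B St P) Pinf := by
      refine ContinuousAt.sub ((continuousAt_const).add hF.continuousAt) ?_
      exact continuousAt_matmul (continuousAt_matmul (hH.matrix_transpose.continuousAt) hinv)
        hH.continuousAt
    exact this
  have htend2 : Tendsto (fun k => Pseq A B St Q R (k + 1)) atTop (nhds Pinf) :=
    htendM.comp (tendsto_add_atTop_nat 1)
  have htend3 : Tendsto (fun k => Tmap A B St Q R (Pseq A B St Q R k)) atTop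
      (nhds (Tmap A B St Q R Pinf)) := hcontT.tendsto.comp htendM
  have hfix : Pinf = Tmap A B St Q R Pinf := tendsto_nhds_unique htend2 htend3
  exact ⟨Pinf, hPinfPD, htend, hfix⟩


end
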